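/- Let V and W be vector spaces over a field k, let v_1, …, v_r be a basis of V and w_1, …, w_s a basis of W, and let v ∈ V, w ∈ W be arbitrary vectors. Then the span X ⊆ V ⊕ W of the vectors (v_1, w), …, (v_r, w), (v, w_1), …, (v, w_s) has dimension at least r + s − 1. -/

import Mathlib

open Module Submodule

lemma stmt11_aux {k M : Type*} [Field k] [AddCommGroup M] [Module k M]
    [Module.Finite k M] {ι : Type*} [Fintype ι] (X : Submodule k M)
    (u : ι → M) (hu : ∀ i, u i ∈ X) (hind : LinearIndependent k u) :
    Fintype.card ι ≤ Module.finrank k X := by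
  have h : LinearIndependent k (fun i => (⟨u i, hu i⟩ : X)) :=
    LinearIndependent.of_comp X.subtype hind
  exact h.fintype_card_le_finrank

theorem stmt11 {k V W : Type*} [Field k] [AddCommGroup V] [Module k V]
    [AddCommGroup W] [Module k W] {r s : ℕ}
    (bV : Basis (Fin r) k V) (bW : Basis (Fin s) k W) (v : V) (w : W) :
    r + s - 1 ≤
      Module.finrank k
        ↥(Submodule.span k
          ((Set.range fun i => ((bV i, w) : V × W)) ∪
            (Set.range fun j => ((v, bW j) : V × W)))) := by
  haveI : Module.Finite k V := Module.Finite.of_basis bV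
  haveI : Module.Finite k W := Module.Finite.of_basis bW
  set X : Submodule k (V × W) := Submodule.span k
          ((Set.range fun i => ((bV i, w) : V × W)) ∪
            (Set.range fun j => ((v, bW j) : V × W))) with hX
  obtain _ | t := s
  · -- s = 0
    have hu : ∀ i : Fin r, ((bV i, w) : V × W) ∈ X :=
      fun i => subset_span (Or.inl ⟨i, rfl⟩)
    have hind : LinearIndependent k (fun i : Fin r => ((bV i, w) : V × W)) := by
      apply LinearIndependent.of_comp (LinearMap.fst k V W)
      simpa [Function.comp_def] using bV.linearIndependent
    have := stmt11_aux X _ hu hind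
    simp only [Fintype.card_fin] at this
    omega
  · -- s = t + 1
    set u : Fin r ⊕ Fin t → V × W :=
      Sum.elim (fun i => ((bV i, w) : V × W))
        (fun j => (((0 : V), bW j.succ - bW 0) : V × W)) with hu_def
    have hu : ∀ i, u i ∈ X := by
      rintro (i | j)
      · exact subset_span (Or.inl ⟨i, rfl⟩)
      · have he : u (Sum.inr j) = ((v, bW j.succ) : V × W) - (v, bW 0) := by
          simp [hu_def, Prod.ext_iff]
        rw [he]
        exact sub_mem (subset_span (Or.inr ⟨j.succ, rfl⟩))
          (subset_span (Or.inr ⟨0, rfl⟩))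
    have hind : LinearIndependent k u := by
      rw [Fintype.linearIndependent_iff]
      intro g hg
      rw [Fintype.sum_sum_type] at hg
      have h1 := congrArg Prod.fst hg
      have h2 := congrArg Prod.snd hg
      simp only [hu_def, Sum.elim_inl, Sum.elim_inr, Prod.smul_mk, Prod.fst_sum,
        Prod.snd_sum, Prod.fst_add, Prod.snd_add, smul_zero, Finset.sum_const_zero,
        add_zero, Prod.fst_zero, Prod.snd_zero, smul_eq_mul] at h1 h2
      have hinl : ∀ i, g (Sum.inl i) = 0 :=
        Fintype.linearIndependent_iff.mp bV.linearIndependent _ h1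
      simp only [hinl, zero_smul, Finset.sum_const_zero, zero_add] at h2
      set d : Fin (t + 1) → k :=
        Fin.cons (-(∑ j, g (Sum.inr j))) (fun j => g (Sum.inr j)) with hd
      have hdsum : ∑ i, d i • bW i = 0 := by
        rw [Fin.sum_univ_succ]
        simp only [hd, Fin.cons_zero, Fin.cons_succ, neg_smul, Finset.sum_smul]
        simp only [smul_sub, Finset.sum_sub_distrib] at h2
        rw [add_comm, ← sub_eq_add_neg]
        exact h2
      have hd0 : ∀ i, d i = 0 :=
        Fintype.linearIndependent_iff.mp bW.linearIndependent _ hdsum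
      rintro (i | j)
      · exact hinl i
      · exact hd0 j.succ
    have := stmt11_aux X u hu hind
    simp only [Fintype.card_sum, Fintype.card_fin] at this
    omega
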